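/- With V as the correlation-pattern matrix of PWO factors (V[{i,j},{i,k}] = V[{i,k},{j,k}] = 1, V[{i,j},{j,k}] = −1 for i<j<k, zero otherwise off-diagonal, and zero diagonal), the determinant of I + V/3 equals (m+1)^{m−1} / 3^{m(m−1)/2}. -/

import Mathlib

open Matrix

/-- Index type of the pairs `{i < j}` of components. -/
abbrev PairIdx (m : ℕ) := {p : Fin m × Fin m // p.1 < p.2}

/-- The PWO correlation-pattern matrix `V`. -/
noncomputable def Vmat (m : ℕ) : Matrix (PairIdx m) (PairIdx m) ℝ := fun a b =>
  if a = b then 0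
  else if a.1.1 = b.1.1 ∨ a.1.2 = b.1.2 then 1
  else if a.1.2 = b.1.1 ∨ a.1.1 = b.1.2 then -1
  else 0

/-- The incidence matrix `T` with `T_{{i<j},k} = δ_{ik} - δ_{jk}`. -/
noncomputable def Tmat (m : ℕ) : Matrix (PairIdx m) (Fin m) ℝ := fun a k =>
  (if a.1.1 = k then 1 else 0) - (if a.1.2 = k then 1 else 0)

lemma sum_dd {m : ℕ} (x y : Fin m) :
    ∑ k : Fin m, (if x = k then (1:ℝ) else 0) * (if y = k then (1:ℝ) else 0)
      = if x = y then 1 else 0 := by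
  simp [ite_mul, Finset.sum_ite_eq]

lemma TTt (m : ℕ) :
    Tmat m * (Tmat m)ᵀ = 2 • (1 : Matrix (PairIdx m) (PairIdx m) ℝ) + Vmat m := by
  ext a b
  obtain ⟨⟨i, j⟩, hij⟩ := a
  obtain ⟨⟨i', j'⟩, hij'⟩ := b
  have key : ∑ k : Fin m, Tmat m ⟨(i,j), hij⟩ k * Tmat m ⟨(i',j'), hij'⟩ k
      = (if i = i' then (1:ℝ) else 0) - (if i = j' then 1 else 0)
        - (if j = i' then 1 else 0) + (if j = j' then 1 else 0) := by
    simp only [Tmat, sub_mul, mul_sub, Finset.sum_sub_distrib, sum_dd]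
    ring
  simp only [Matrix.mul_apply, Matrix.transpose_apply, key, Matrix.add_apply,
    Matrix.smul_apply, Matrix.one_apply, Vmat, Subtype.mk.injEq, Prod.mk.injEq,
    smul_eq_mul]
  have h1 : (i:ℕ) < j := hij
  have h2 : (i':ℕ) < j' := hij'
  simp only [Fin.ext_iff]
  split_ifs <;> (try norm_num) <;> omega

lemma halfsum {m : ℕ} (F : Fin m × Fin m → ℝ)
    (hsymm : ∀ i j, F (j, i) = F (i, j)) (hdiag : ∀ i, F (i, i) = 0) :
    ∑ p : Fin m × Fin m, (if p.1 < p.2 then F p else 0)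
      = (∑ p : Fin m × Fin m, F p) / 2 := by
  have h2 : ∑ p : Fin m × Fin m, (if p.2 < p.1 then F p else 0)
      = ∑ p : Fin m × Fin m, (if p.1 < p.2 then F p else 0) := by
    apply Fintype.sum_equiv (Equiv.prodComm (Fin m) (Fin m))
    intro ⟨a, b⟩
    by_cases h : b < a <;> simp [h, hsymm a b]
  have h3 : ∑ p : Fin m × Fin m, F p
      = ∑ p : Fin m × Fin m,
        ((if p.1 < p.2 then F p else 0) + (if p.2 < p.1 then F p else 0)) := by
    apply Finset.sum_congr rfl
    intro ⟨a, b⟩ _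
    rcases lt_trichotomy a b with h | h | h
    · simp [h, asymm h]
    · subst h; simp [hdiag, lt_irrefl]
    · simp [h, asymm h]
  rw [h3, Finset.sum_add_distrib, h2]; ring

lemma fullsum {m : ℕ} (k l : Fin m) :
    ∑ p : Fin m × Fin m,
      (((if p.1 = k then (1:ℝ) else 0) - if p.2 = k then 1 else 0) *
       ((if p.1 = l then (1:ℝ) else 0) - if p.2 = l then 1 else 0))
      = 2 * ((if k = l then (m:ℝ) else 0) - 1) := by
  rw [Fintype.sum_prod_type]
  simp only [sub_mul, mul_sub, Finset.sum_sub_distrib, ite_mul, mul_ite, one_mul,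
    mul_one, zero_mul, mul_zero, Finset.sum_ite_eq, Finset.sum_ite_eq',
    Finset.mem_univ, if_true, Finset.sum_const, Finset.card_univ, Fintype.card_fin,
    nsmul_eq_mul, Finset.sum_add_distrib]
  split_ifs <;> simp_all <;> ring

lemma TtT (m : ℕ) :
    (Tmat m)ᵀ * Tmat m = Matrix.of fun k l => (if k = l then (m:ℝ) else 0) - 1 := by
  ext k l
  rw [Matrix.mul_apply]
  simp only [Matrix.transpose_apply, Tmat, Matrix.of_apply]
  have hs : ∑ a : PairIdx m,
      (((if a.1.1 = k then (1:ℝ) else 0) - if a.1.2 = k then 1 else 0) *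
       ((if a.1.1 = l then (1:ℝ) else 0) - if a.1.2 = l then 1 else 0))
      = ∑ p ∈ Finset.univ.filter (fun p : Fin m × Fin m => p.1 < p.2),
        (((if p.1 = k then (1:ℝ) else 0) - if p.2 = k then 1 else 0) *
         ((if p.1 = l then (1:ℝ) else 0) - if p.2 = l then 1 else 0)) :=
    (Finset.sum_subtype (Finset.univ.filter (fun p : Fin m × Fin m => p.1 < p.2))
      (fun x => by simp)
      (fun p : Fin m × Fin m =>
        (((if p.1 = k then (1:ℝ) else 0) - if p.2 = k then 1 else 0) *
         ((if p.1 = l then (1:ℝ) else 0) - if p.2 = l then 1 else 0)))).symm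
  rw [hs, Finset.sum_filter, halfsum _ (by intros; ring) (by intros; ring), fullsum]
  ring

lemma det_step (m : ℕ) (hm : 1 ≤ m) :
    ((1 : Matrix (Fin m) (Fin m) ℝ) +
      Matrix.of fun k l => (if k = l then (m:ℝ) else 0) - 1).det
      = ((m:ℝ) + 1) ^ (m - 1) := by
  have hm1 : ((m:ℝ) + 1) ≠ 0 := by positivity
  have hE : (1 : Matrix (Fin m) (Fin m) ℝ) +
      Matrix.of (fun k l => (if k = l then (m:ℝ) else 0) - 1)
      = ((m:ℝ) + 1) • (1 + Matrix.replicateCol (Fin 1) (fun _ : Fin m => -((m:ℝ)+1)⁻¹) *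
          Matrix.replicateRow (Fin 1) (fun _ : Fin m => (1:ℝ))) := by
    ext k l
    simp only [Matrix.add_apply, Matrix.one_apply, Matrix.of_apply, Matrix.smul_apply,
      Matrix.mul_apply, Matrix.replicateCol_apply, Matrix.replicateRow_apply, Fin.sum_univ_one, smul_eq_mul]
    split_ifs <;> field_simp <;> ring
  rw [hE, Matrix.det_smul]
  erw [Matrix.det_one_add_replicateCol_mul_replicateRow]
  simp only [dotProduct, Fintype.card_fin, Finset.sum_const, Finset.card_univ,
    one_mul, nsmul_eq_mul, smul_eq_mul]
  have h : ((m:ℝ)+1)^m = ((m:ℝ)+1)^(m-1) * ((m:ℝ)+1) := by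
    rw [← pow_succ]; congr 1; omega
  rw [h]
  field_simp
  ring

def pairEquiv (m : ℕ) : PairIdx m ≃ Σ j : Fin m, Fin j.val where
  toFun a := ⟨a.1.2, ⟨a.1.1, a.2⟩⟩
  invFun x := ⟨(⟨x.2, lt_trans x.2.isLt x.1.isLt⟩, x.1), x.2.isLt⟩
  left_inv a := rfl
  right_inv x := rfl

lemma cardPair (m : ℕ) : Fintype.card (PairIdx m) = m * (m - 1) / 2 := by
  rw [Fintype.card_congr (pairEquiv m), Fintype.card_sigma]
  simp only [Fintype.card_fin]
  rw [Fin.sum_univ_eq_sum_range (fun i => i) m, Finset.sum_range_id]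

/-- `det(I + V/3) = (m+1)^(m-1) / 3^(m(m-1)/2)`. -/
theorem stmt9 (m : ℕ) (hm : 2 ≤ m) :
    (1 + (3 : ℝ)⁻¹ • Vmat m).det
      = ((m : ℝ) + 1) ^ (m - 1) / 3 ^ (m * (m - 1) / 2) := by
  have hM : (1 : Matrix (PairIdx m) (PairIdx m) ℝ) + (3:ℝ)⁻¹ • Vmat m
      = (3:ℝ)⁻¹ • (1 + Tmat m * (Tmat m)ᵀ) := by
    rw [TTt]
    ext a b
    simp only [Matrix.add_apply, Matrix.smul_apply, Matrix.one_apply, smul_eq_mul]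
    split_ifs <;> ring
  rw [hM, Matrix.det_smul, Matrix.det_one_add_mul_comm, TtT,
    det_step m (by omega), cardPair, inv_pow]
  ring
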